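/- Let $g$ be a bounded analytic function on the strip $S_\theta = \{z \in \mathbb{C} : |\operatorname{Im} z| < \theta\}$ and suppose that for some $0 < \eta < \theta$ the restriction of $g$ to the two lines $\operatorname{Im} z = \pm\eta$ belongs to $L^2(\mathbb{R})$. Then $\sum_{n \in \mathbb{Z}} |g(n \ln 2)|^2 < \infty$. -/

import Mathlib

open MeasureTheory Complex

namespace Stmt4Aux

open Set Filter

lemma ker_integrable {η : ℝ} (hη : 0 < η) (a : ℝ) :
    Integrable (fun t : ℝ => ((t - a) ^ 2 + η ^ 2)⁻¹) := by
  have h0 : Integrable (fun x : ℝ => (1 + x ^ 2)⁻¹) := integrable_inv_one_add_sq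
  have h1 : Integrable (fun x : ℝ => (1 + (x * η⁻¹) ^ 2)⁻¹) :=
    h0.comp_mul_right' (inv_ne_zero hη.ne')
  have h2 : Integrable (fun x : ℝ => (1 + ((x - a) * η⁻¹) ^ 2)⁻¹) := h1.comp_sub_right a
  have h3 := h2.const_mul ((η ^ 2)⁻¹)
  apply h3.congr
  filter_upwards with t
  have hne : (η : ℝ) ≠ 0 := hη.ne'
  have key : (t - a) ^ 2 + η ^ 2 = η ^ 2 * (1 + ((t - a) * η⁻¹) ^ 2) := by
    field_simp
    try ring
  rw [key, mul_inv]
  try ring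

lemma ker_integral {η : ℝ} (hη : 0 < η) (a : ℝ) :
    ∫ t : ℝ, ((t - a) ^ 2 + η ^ 2)⁻¹ = Real.pi / η := by
  have hne : (η : ℝ) ≠ 0 := hη.ne'
  have hshift : (∫ t : ℝ, ((t - a) ^ 2 + η ^ 2)⁻¹) = ∫ t : ℝ, (t ^ 2 + η ^ 2)⁻¹ :=
    integral_sub_right_eq_self (fun t : ℝ => (t ^ 2 + η ^ 2)⁻¹) a
  rw [hshift]
  have hpt : ∀ t : ℝ, (t ^ 2 + η ^ 2)⁻¹ = (η ^ 2)⁻¹ * (1 + (η⁻¹ * t) ^ 2)⁻¹ := by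
    intro t
    have key : t ^ 2 + η ^ 2 = η ^ 2 * (1 + (η⁻¹ * t) ^ 2) := by field_simp; try ring
    rw [key, mul_inv]; try ring
  simp_rw [hpt]
  rw [MeasureTheory.integral_const_mul, MeasureTheory.Measure.integral_comp_mul_left
    (fun x : ℝ => (1 + x ^ 2)⁻¹) η⁻¹, integral_univ_inv_one_add_sq]
  rw [inv_inv, abs_of_pos hη, smul_eq_mul]
  field_simp

lemma cs_int {h k : ℝ → ℝ} (hh0 : ∀ t, 0 ≤ h t) (hk0 : ∀ t, 0 ≤ k t)
    (hhm : AEStronglyMeasurable h (volume : Measure ℝ))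
    (hkm : AEStronglyMeasurable k (volume : Measure ℝ))
    (hki : Integrable k) (hh2k : Integrable (fun t => h t ^ 2 * k t)) :
    (∫ t : ℝ, h t * k t) ^ 2 ≤ (∫ t : ℝ, h t ^ 2 * k t) * ∫ t : ℝ, k t := by
  set f : ℝ → ℝ := fun t => h t * Real.sqrt (k t) with hf
  set u : ℝ → ℝ := fun t => Real.sqrt (k t) with hu
  have hfm : AEStronglyMeasurable f volume :=
    hhm.mul (Real.continuous_sqrt.comp_aestronglyMeasurable hkm)
  have hum : AEStronglyMeasurable u volume :=
    Real.continuous_sqrt.comp_aestronglyMeasurable hkm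
  have hfsq : ∀ t, f t ^ 2 = h t ^ 2 * k t := by
    intro t; rw [hf]; simp only [mul_pow, Real.sq_sqrt (hk0 t)]
  have husq : ∀ t, u t ^ 2 = k t := fun t => Real.sq_sqrt (hk0 t)
  have hfu : ∀ t, f t * u t = h t * k t := by
    intro t
    rw [hf, hu]
    calc h t * Real.sqrt (k t) * Real.sqrt (k t) = h t * (Real.sqrt (k t) * Real.sqrt (k t)) := by
          ring
      _ = h t * k t := by rw [Real.mul_self_sqrt (hk0 t)]
  have hf2 : MemLp f 2 volume := by
    rw [memLp_two_iff_integrable_sq hfm]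
    exact hh2k.congr (Eventually.of_forall fun t => (hfsq t).symm)
  have hu2 : MemLp u 2 volume := by
    rw [memLp_two_iff_integrable_sq hum]
    exact hki.congr (Eventually.of_forall fun t => (husq t).symm)
  have hconj : (2 : ℝ).HolderConjugate 2 := ⟨by norm_num, by norm_num, by norm_num⟩
  have h2e : ENNReal.ofReal (2 : ℝ) = 2 := by norm_num
  have key := MeasureTheory.integral_mul_le_Lp_mul_Lq_of_nonneg hconj
    (Eventually.of_forall fun t => mul_nonneg (hh0 t) (Real.sqrt_nonneg _))
    (Eventually.of_forall fun t => Real.sqrt_nonneg _)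
    (h2e ▸ hf2) (h2e ▸ hu2)
  have hrw1 : (∫ t : ℝ, f t * u t) = ∫ t : ℝ, h t * k t :=
    integral_congr_ae (Eventually.of_forall fun t => hfu t)
  have hrw2 : (∫ t : ℝ, f t ^ (2 : ℝ)) = ∫ t : ℝ, h t ^ 2 * k t := by
    refine integral_congr_ae (Eventually.of_forall fun t => ?_)
    show f t ^ (2:ℝ) = h t ^ 2 * k t
    rw [show f t ^ (2:ℝ) = f t ^ (2:ℕ) from by rw [← Real.rpow_natCast (f t) 2]; norm_num]
    exact hfsq t
  have hrw3 : (∫ t : ℝ, u t ^ (2 : ℝ)) = ∫ t : ℝ, k t := by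
    refine integral_congr_ae (Eventually.of_forall fun t => ?_)
    show u t ^ (2:ℝ) = k t
    rw [show u t ^ (2:ℝ) = u t ^ (2:ℕ) from by rw [← Real.rpow_natCast (u t) 2]; norm_num]
    exact husq t
  rw [hrw1, hrw2, hrw3] at key
  have hA : 0 ≤ ∫ t : ℝ, h t ^ 2 * k t :=
    integral_nonneg fun t => mul_nonneg (sq_nonneg _) (hk0 t)
  have hB : 0 ≤ ∫ t : ℝ, k t := integral_nonneg fun t => hk0 t
  have hL : 0 ≤ ∫ t : ℝ, h t * k t :=
    integral_nonneg fun t => mul_nonneg (hh0 t) (hk0 t)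
  calc (∫ t : ℝ, h t * k t) ^ 2
      ≤ ((∫ t : ℝ, h t ^ 2 * k t) ^ (1 / (2:ℝ)) * (∫ t : ℝ, k t) ^ (1 / (2:ℝ))) ^ 2 :=
        pow_le_pow_left₀ hL key 2
    _ = (∫ t : ℝ, h t ^ 2 * k t) * ∫ t : ℝ, k t := by
        rw [mul_pow, ← Real.rpow_natCast ((∫ t : ℝ, h t ^ 2 * k t) ^ (1 / (2:ℝ))) 2,
          ← Real.rpow_natCast ((∫ t : ℝ, k t) ^ (1 / (2:ℝ))) 2,
          ← Real.rpow_mul hA, ← Real.rpow_mul hB]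
        norm_num


lemma lattice_bound {η l : ℝ} (hη : 0 < η) (hl : 0 < l) :
    ∃ B : ℝ, ∀ (t : ℝ) (F : Finset ℤ),
      ∑ n ∈ F, ((t - n * l) ^ 2 + η ^ 2)⁻¹ ≤ B := by
  have hsum : Summable (fun j : ℤ => ((j : ℝ) ^ 2)⁻¹) := by
    simpa [one_div] using (Real.summable_one_div_int_pow (p := 2)).mpr one_lt_two
  set T : ℝ := ∑' j : ℤ, ((j : ℝ) ^ 2)⁻¹ with hT
  refine ⟨(η ^ 2)⁻¹ + 4 / l ^ 2 * T, fun t F => ?_⟩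
  set m : ℤ := round (t / l) with hm
  have hclose : |t - m * l| ≤ l / 2 := by
    have h1 : |t / l - m| ≤ 1 / 2 := abs_sub_round (t / l)
    have h2 : |t - m * l| = |t / l - m| * l := by
      have e : t - m * l = (t / l - m) * l := by
        rw [sub_mul, div_mul_cancel₀ t hl.ne']
      rw [e, abs_mul, abs_of_pos hl]
    rw [h2]
    calc |t / l - m| * l ≤ (1 / 2) * l := mul_le_mul_of_nonneg_right h1 hl.le
      _ = l / 2 := by ring
  have hterm : ∀ n : ℤ, n ≠ m → ((t - n * l) ^ 2 + η ^ 2)⁻¹ ≤ 4 / l ^ 2 * (((n : ℝ) - m) ^ 2)⁻¹ := by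
    intro n hn
    have hne' : ((n : ℝ) - (m : ℝ)) ≠ 0 := sub_ne_zero.mpr (by exact_mod_cast hn)
    have h1 : (1 : ℝ) ≤ |(n : ℝ) - m| := by
      have h0 : (1 : ℤ) ≤ |n - m| := Int.one_le_abs (sub_ne_zero.mpr hn)
      calc (1 : ℝ) = ((1 : ℤ) : ℝ) := by norm_num
        _ ≤ ((|n - m| : ℤ) : ℝ) := by exact_mod_cast h0
        _ = |(n : ℝ) - m| := by push_cast; ring
    have hfar : (l / 2) * |(n : ℝ) - m| ≤ |t - n * l| := by
      have htri : |(n : ℝ) * l - m * l| ≤ |t - n * l| + |t - m * l| := by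
        calc |(n : ℝ) * l - m * l| = |(t - m * l) - (t - n * l)| := by
              rw [show ((n : ℝ) * l - m * l) = (t - m * l) - (t - n * l) from by ring]
          _ ≤ |t - m * l| + |t - n * l| := abs_sub _ _
          _ = |t - n * l| + |t - m * l| := by ring
      have he : |(n : ℝ) * l - m * l| = |(n : ℝ) - m| * l := by
        rw [show ((n : ℝ) * l - m * l) = ((n : ℝ) - m) * l from by ring, abs_mul, abs_of_pos hl]
      have h2 : (l / 2) * |(n : ℝ) - m| ≤ |(n : ℝ) - m| * l - l / 2 := by nlinarith
      rw [he] at htri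
      linarith
    have hsq : ((l / 2) * |(n : ℝ) - m|) ^ 2 ≤ (t - n * l) ^ 2 + η ^ 2 := by
      have hnn : -(|t - (n : ℝ) * l|) ≤ (l / 2) * |(n : ℝ) - m| := by
        have hp : (0:ℝ) ≤ (l / 2) * |(n : ℝ) - m| := by positivity
        linarith [abs_nonneg (t - (n : ℝ) * l)]
      have hx := sq_le_sq' hnn hfar
      calc ((l / 2) * |(n : ℝ) - m|) ^ 2 ≤ |t - n * l| ^ 2 := hx
        _ = (t - n * l) ^ 2 := _root_.sq_abs _
        _ ≤ (t - n * l) ^ 2 + η ^ 2 := by nlinarith [sq_nonneg η]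
    calc ((t - n * l) ^ 2 + η ^ 2)⁻¹ ≤ (((l / 2) * |(n : ℝ) - m|) ^ 2)⁻¹ :=
          inv_anti₀ (by positivity) hsq
      _ = 4 / l ^ 2 * (((n : ℝ) - m) ^ 2)⁻¹ := by
          rw [mul_pow, _root_.sq_abs, mul_inv]
          congr 1
          rw [show ((l / 2 : ℝ)) ^ 2 = l ^ 2 / 4 from by ring, inv_div]
  have hstep : ∀ n ∈ F, ((t - n * l) ^ 2 + η ^ 2)⁻¹ ≤
      (if n = m then (η ^ 2)⁻¹ else 0) + 4 / l ^ 2 * (((n : ℝ) - m) ^ 2)⁻¹ := by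
    intro n _
    by_cases hnm : n = m
    · simp only [if_pos hnm]
      have hb : ((t - n * l) ^ 2 + η ^ 2)⁻¹ ≤ (η ^ 2)⁻¹ :=
        inv_anti₀ (by positivity) (by nlinarith [sq_nonneg (t - (n : ℤ) * l)])
      have h0 : (0 : ℝ) ≤ 4 / l ^ 2 * (((n : ℝ) - m) ^ 2)⁻¹ := by positivity
      linarith
    · simp only [if_neg hnm, zero_add]
      exact hterm n hnm
  calc ∑ n ∈ F, ((t - n * l) ^ 2 + η ^ 2)⁻¹
      ≤ ∑ n ∈ F, ((if n = m then (η ^ 2)⁻¹ else 0) + 4 / l ^ 2 * (((n : ℝ) - m) ^ 2)⁻¹) :=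
        Finset.sum_le_sum hstep
    _ = (∑ n ∈ F, if n = m then (η ^ 2)⁻¹ else 0)
        + 4 / l ^ 2 * ∑ n ∈ F, (((n : ℝ) - m) ^ 2)⁻¹ := by
        rw [Finset.sum_add_distrib, Finset.mul_sum]
    _ ≤ (η ^ 2)⁻¹ + 4 / l ^ 2 * T := by
        gcongr
        · rw [Finset.sum_ite_eq' F m (fun _ => (η ^ 2)⁻¹)]
          split
          · exact le_rfl
          · positivity
        · have himg : ∑ n ∈ F, (((n : ℝ) - m) ^ 2)⁻¹
              = ∑ j ∈ F.image (fun n => n - m), (((j : ℤ) : ℝ) ^ 2)⁻¹ := by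
            rw [Finset.sum_image (by intro x _ y _ hxy; simp only at hxy; omega)]
            refine Finset.sum_congr rfl fun n _ => ?_
            push_cast
            ring_nf
          rw [himg]
          exact Summable.sum_le_tsum _ (fun j _ => by positivity) hsum

lemma pointwise (θ η : ℝ) (hη : 0 < η) (hηθ : η < θ)
    (g : ℂ → ℂ)
    (hg : DifferentiableOn ℂ g {z : ℂ | |z.im| < θ})
    (hbdd : ∃ M, ∀ z : ℂ, |z.im| < θ → ‖g z‖ ≤ M)
    (hplus : Integrable (fun x : ℝ => ‖g (x + η * I)‖ ^ 2))
    (hminus : Integrable (fun x : ℝ => ‖g (x - η * I)‖ ^ 2))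
    (a : ℝ) :
    ‖g a‖ ≤ (η / Real.pi) *
      ∫ t : ℝ, (‖g (t + η * I)‖ + ‖g (t - η * I)‖) * ((t - a) ^ 2 + η ^ 2)⁻¹ := by
  obtain ⟨M, hM⟩ := hbdd
  have hθ : 0 < θ := hη.trans hηθ
  have hM0 : 0 ≤ M := le_trans (norm_nonneg (g 0)) (hM 0 (by simpa using hθ))
  set S : Set ℂ := {z : ℂ | |z.im| < θ} with hS
  have hSopen : IsOpen S := isOpen_lt (continuous_abs.comp continuous_im) continuous_const
  set b : ℂ := (a : ℂ) + 2 * η * I with hb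
  have hbim : b.im = 2 * η := by simp [hb]
  set U : Set ℂ := S \ {b} with hU
  have hUopen : IsOpen U := hSopen.sdiff isClosed_singleton
  have haU : (a : ℂ) ∈ U := by
    constructor
    · show |(a : ℂ).im| < θ
      simpa using hθ
    · simp only [mem_singleton_iff]
      intro hab
      have := congrArg Complex.im hab
      simp [hbim] at this
      linarith
  set G : ℂ → ℂ := fun w => g w / (w - b) with hG
  have hGd : DifferentiableOn ℂ G U := by
    apply DifferentiableOn.div (hg.mono diff_subset)
    · exact (differentiableOn_id.sub (differentiableOn_const b))
    · intro w hw
      exact sub_ne_zero.mpr hw.2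
  set F : ℂ → ℂ := dslope G a with hF
  have hFd : DifferentiableOn ℂ F U := (differentiableOn_dslope (hUopen.mem_nhds haU)).mpr hGd
  -- norms on the two horizontal lines
  have habs : ∀ s c : ℝ, ‖(s : ℂ) + (c : ℂ) * I‖ = Real.sqrt (s ^ 2 + c ^ 2) := by
    intro s c
    rw [Complex.norm_def, Complex.normSq_apply]
    have h1 : ((s : ℂ) + (c : ℂ) * I).re = s := by simp
    have h2 : ((s : ℂ) + (c : ℂ) * I).im = c := by simp
    rw [h1, h2]
    congr 1
    ring
  set kk : ℝ → ℝ := fun t => ((t - a) ^ 2 + η ^ 2)⁻¹ with hkk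
  have hkpos : ∀ t, 0 < (t - a) ^ 2 + η ^ 2 := fun t => by positivity
  -- lower bound for products of distances, bottom line
  have hprod_bot : ∀ t : ℝ, (t - a) ^ 2 + η ^ 2 ≤ ‖(t : ℂ) - η * I - a‖ * ‖(t : ℂ) - η * I - b‖ := by
    intro t
    have e1 : (t : ℂ) - (η : ℂ) * I - a = ((t - a : ℝ) : ℂ) + ((-η : ℝ) : ℂ) * I := by
      push_cast; ring
    have e2 : (t : ℂ) - (η : ℂ) * I - b = ((t - a : ℝ) : ℂ) + ((-(3 * η) : ℝ) : ℂ) * I := by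
      rw [hb]; push_cast; ring
    rw [e1, e2, habs, habs]
    have hle : (t - a) ^ 2 + (-η) ^ 2 ≤ (t - a) ^ 2 + (-(3 * η)) ^ 2 := by nlinarith
    calc (t - a) ^ 2 + η ^ 2
        = Real.sqrt ((t - a) ^ 2 + (-η) ^ 2) * Real.sqrt ((t - a) ^ 2 + (-η) ^ 2) := by
          rw [Real.mul_self_sqrt (by positivity)]; ring
      _ ≤ Real.sqrt ((t - a) ^ 2 + (-η) ^ 2) * Real.sqrt ((t - a) ^ 2 + (-(3 * η)) ^ 2) := by
          apply mul_le_mul_of_nonneg_left (Real.sqrt_le_sqrt hle) (Real.sqrt_nonneg _)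
  have hprod_top : ∀ t : ℝ, (t - a) ^ 2 + η ^ 2 ≤ ‖(t : ℂ) + η * I - a‖ * ‖(t : ℂ) + η * I - b‖ := by
    intro t
    have e1 : (t : ℂ) + (η : ℂ) * I - a = ((t - a : ℝ) : ℂ) + ((η : ℝ) : ℂ) * I := by
      push_cast; ring
    have e2 : (t : ℂ) + (η : ℂ) * I - b = ((t - a : ℝ) : ℂ) + ((-η : ℝ) : ℂ) * I := by
      rw [hb]; push_cast; ring
    rw [e1, e2, habs, habs]
    have h3 : (t - a) ^ 2 + (η) ^ 2 = (t - a) ^ 2 + (-η) ^ 2 := by ring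
    rw [← h3, Real.mul_self_sqrt (by positivity)]
  -- nonvanishing of denominators on lines
  have hne_bot_a : ∀ t : ℝ, (t : ℂ) - (η : ℂ) * I - (a : ℂ) ≠ 0 := by
    intro t h
    have := congrArg Complex.im h
    simp at this
    linarith
  have hne_bot_b : ∀ t : ℝ, (t : ℂ) - (η : ℂ) * I - b ≠ 0 := by
    intro t h
    have := congrArg Complex.im h
    rw [hb] at this
    simp at this
    linarith
  have hne_top_a : ∀ t : ℝ, (t : ℂ) + (η : ℂ) * I - (a : ℂ) ≠ 0 := by
    intro t h
    have := congrArg Complex.im h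
    simp at this
    linarith
  have hne_top_b : ∀ t : ℝ, (t : ℂ) + (η : ℂ) * I - b ≠ 0 := by
    intro t h
    have := congrArg Complex.im h
    rw [hb] at this
    simp at this
    linarith
  -- pointwise norm bounds for the integrands
  have hGbot : ∀ t : ℝ, ‖G ((t : ℂ) - η * I) / ((t : ℂ) - η * I - a)‖
      ≤ ‖g ((t : ℂ) - η * I)‖ * kk t := by
    intro t
    rw [hG]
    rw [div_div]
    rw [norm_div, norm_mul]
    rw [div_eq_mul_inv]
    apply mul_le_mul_of_nonneg_left _ (norm_nonneg _)
    rw [hkk]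
    apply inv_anti₀ (hkpos t)
    calc (t - a) ^ 2 + η ^ 2 ≤ ‖(t : ℂ) - η * I - a‖ * ‖(t : ℂ) - η * I - b‖ := hprod_bot t
      _ = ‖(t : ℂ) - η * I - b‖ * ‖(t : ℂ) - η * I - a‖ := mul_comm _ _
  have hGtop : ∀ t : ℝ, ‖G ((t : ℂ) + η * I) / ((t : ℂ) + η * I - a)‖
      ≤ ‖g ((t : ℂ) + η * I)‖ * kk t := by
    intro t
    rw [hG, div_div, norm_div, norm_mul, div_eq_mul_inv]
    apply mul_le_mul_of_nonneg_left _ (norm_nonneg _)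
    rw [hkk]
    apply inv_anti₀ (hkpos t)
    calc (t - a) ^ 2 + η ^ 2 ≤ ‖(t : ℂ) + η * I - a‖ * ‖(t : ℂ) + η * I - b‖ := hprod_top t
      _ = ‖(t : ℂ) + η * I - b‖ * ‖(t : ℂ) + η * I - a‖ := mul_comm _ _
  -- continuity of line restrictions
  have hgc : ContinuousOn g S := hg.continuousOn
  have hline : ∀ c : ℝ, |c| < θ → Continuous fun t : ℝ => g ((t : ℂ) + (c : ℂ) * I) := by
    intro c hc
    apply hgc.comp_continuous (Complex.continuous_ofReal.add continuous_const)
    intro t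
    show |((t : ℂ) + (c : ℂ) * I).im| < θ
    simpa using hc
  have hctop : Continuous fun t : ℝ => g ((t : ℂ) + (η : ℂ) * I) :=
    hline η (by rwa [abs_of_pos hη])
  have hcbot : Continuous fun t : ℝ => g ((t : ℂ) - (η : ℂ) * I) := by
    have h0 := hline (-η) (by rwa [abs_neg, abs_of_pos hη])
    have he : ∀ t : ℝ, (t : ℂ) + ((-η : ℝ) : ℂ) * I = (t : ℂ) - (η : ℂ) * I := by
      intro t; push_cast; ring
    simpa only [he] using h0
  have hkc : Continuous kk := by
    apply Continuous.inv₀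
    · exact ((continuous_id.sub continuous_const).pow 2).add continuous_const
    · intro t; exact (hkpos t).ne'
  -- integrability of the majorants
  have hmaj_bot : Integrable (fun t : ℝ => ‖g ((t : ℂ) - η * I)‖ * kk t) := by
    have hdom : Integrable (fun t : ℝ => (1 / 2) * (‖g ((t : ℂ) - η * I)‖ ^ 2 + (η ^ 2)⁻¹ * kk t)) :=
      ((hminus.add ((ker_integrable hη a).const_mul ((η ^ 2)⁻¹))).const_mul (1 / 2))
    apply Integrable.mono' hdom ((hcbot.norm.mul hkc).aestronglyMeasurable)
    filter_upwards with t
    have hk0 : 0 ≤ kk t := (inv_pos.mpr (hkpos t)).le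
    have hkle : kk t ≤ (η ^ 2)⁻¹ := by
      rw [hkk]
      apply inv_anti₀ (by positivity)
      nlinarith [sq_nonneg (t - a)]
    show ‖‖g ((t : ℂ) - η * I)‖ * kk t‖ ≤ _
    rw [Real.norm_of_nonneg (mul_nonneg (norm_nonneg _) hk0)]
    nlinarith [sq_nonneg (‖g ((t : ℂ) - η * I)‖ - kk t), norm_nonneg (g ((t : ℂ) - η * I))]
  have hmaj_top : Integrable (fun t : ℝ => ‖g ((t : ℂ) + η * I)‖ * kk t) := by
    have hdom : Integrable (fun t : ℝ => (1 / 2) * (‖g ((t : ℂ) + η * I)‖ ^ 2 + (η ^ 2)⁻¹ * kk t)) :=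
      ((hplus.add ((ker_integrable hη a).const_mul ((η ^ 2)⁻¹))).const_mul (1 / 2))
    apply Integrable.mono' hdom ((hctop.norm.mul hkc).aestronglyMeasurable)
    filter_upwards with t
    have hk0 : 0 ≤ kk t := (inv_pos.mpr (hkpos t)).le
    have hkle : kk t ≤ (η ^ 2)⁻¹ := by
      rw [hkk]
      apply inv_anti₀ (by positivity)
      nlinarith [sq_nonneg (t - a)]
    show ‖‖g ((t : ℂ) + η * I)‖ * kk t‖ ≤ _
    rw [Real.norm_of_nonneg (mul_nonneg (norm_nonneg _) hk0)]
    nlinarith [sq_nonneg (‖g ((t : ℂ) + η * I)‖ - kk t), norm_nonneg (g ((t : ℂ) + η * I))]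
  -- integrability of the complex line integrands
  have hIbot : Integrable (fun t : ℝ => G ((t : ℂ) - η * I) / ((t : ℂ) - η * I - a)) := by
    apply Integrable.mono' hmaj_bot
    · apply Continuous.aestronglyMeasurable
      apply Continuous.div
      · apply Continuous.div hcbot
          ((Complex.continuous_ofReal.sub continuous_const).sub continuous_const)
        intro t; exact hne_bot_b t
      · exact (Complex.continuous_ofReal.sub continuous_const).sub continuous_const
      · intro t; exact hne_bot_a t
    · filter_upwards with t using hGbot t
  have hItop : Integrable (fun t : ℝ => G ((t : ℂ) + η * I) / ((t : ℂ) + η * I - a)) := by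
    apply Integrable.mono' hmaj_top
    · apply Continuous.aestronglyMeasurable
      apply Continuous.div
      · apply Continuous.div hctop
          ((Complex.continuous_ofReal.add continuous_const).sub continuous_const)
        intro t; exact hne_top_b t
      · exact (Complex.continuous_ofReal.add continuous_const).sub continuous_const
      · intro t; exact hne_top_a t
    · filter_upwards with t using hGtop t
  -- notation for the four boundary integrals
  set P : ℝ → ℂ := fun R => ∫ x in (-R)..R, G ((x : ℂ) - η * I) / ((x : ℂ) - η * I - a) with hP
  set Q : ℝ → ℂ := fun R => ∫ x in (-R)..R, G ((x : ℂ) + η * I) / ((x : ℂ) + η * I - a) with hQ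
  set KR : ℝ → ℝ := fun R => ∫ x in (-R)..R, kk x with hKR
  set VR : ℝ → ℂ := fun R => ∫ y in (-η)..η, F ((R : ℂ) + (y : ℂ) * I) with hVR
  set VL : ℝ → ℂ := fun R => ∫ y in (-η)..η, F (((-R : ℝ) : ℂ) + (y : ℂ) * I) with hVL
  have hFbot : ∀ x : ℝ, F ((x : ℂ) + ((-η : ℝ) : ℂ) * I)
      = G ((x : ℂ) - η * I) / ((x : ℂ) - η * I - a) - G a / ((x : ℂ) - η * I - a) := by
    intro x
    have hpt : ((x : ℂ) + ((-η : ℝ) : ℂ) * I) = (x : ℂ) - η * I := by push_cast; ring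
    rw [hpt]
    have hne : ((x : ℂ) - η * I : ℂ) ≠ (a : ℂ) := sub_ne_zero.mp (hne_bot_a x)
    rw [hF, dslope_of_ne G hne, slope_def_field, sub_div]
  have hFtop : ∀ x : ℝ, F ((x : ℂ) + ((η : ℝ) : ℂ) * I)
      = G ((x : ℂ) + η * I) / ((x : ℂ) + η * I - a) - G a / ((x : ℂ) + η * I - a) := by
    intro x
    have hne : ((x : ℂ) + η * I : ℂ) ≠ (a : ℂ) := sub_ne_zero.mp (hne_top_a x)
    rw [hF, dslope_of_ne G hne, slope_def_field, sub_div]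
  have iiGbot : ∀ R : ℝ, IntervalIntegrable
      (fun x : ℝ => G ((x : ℂ) - η * I) / ((x : ℂ) - η * I - a)) volume (-R) R :=
    fun R => hIbot.intervalIntegrable
  have iiGtop : ∀ R : ℝ, IntervalIntegrable
      (fun x : ℝ => G ((x : ℂ) + η * I) / ((x : ℂ) + η * I - a)) volume (-R) R :=
    fun R => hItop.intervalIntegrable
  have iiAbot : ∀ R : ℝ, IntervalIntegrable
      (fun x : ℝ => G a / ((x : ℂ) - η * I - a)) volume (-R) R := by
    intro R
    apply Continuous.intervalIntegrable
    exact continuous_const.div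
      ((Complex.continuous_ofReal.sub continuous_const).sub continuous_const) hne_bot_a
  have iiAtop : ∀ R : ℝ, IntervalIntegrable
      (fun x : ℝ => G a / ((x : ℂ) + η * I - a)) volume (-R) R := by
    intro R
    apply Continuous.intervalIntegrable
    exact continuous_const.div
      ((Complex.continuous_ofReal.add continuous_const).sub continuous_const) hne_top_a
  -- the rectangle identity
  have key : ∀ R : ℝ, |a| + 1 ≤ R →
      P R - Q R - G a * ((2 * (η : ℂ) * I) * ((KR R : ℝ) : ℂ)) + I • VR R - I • VL R = 0 := by
    intro R hR
    set zc : ℂ := ⟨-R, -η⟩ with hzc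
    set wc : ℂ := ⟨R, η⟩ with hwc
    have hzre : zc.re = -R := rfl
    have hzim : zc.im = -η := rfl
    have hwre : wc.re = R := rfl
    have hwim : wc.im = η := rfl
    have hsub : Set.uIcc zc.re wc.re ×ℂ Set.uIcc zc.im wc.im ⊆ U := by
      intro w hw
      rw [mem_reProdIm] at hw
      have h1 : w.im ∈ Set.uIcc zc.im wc.im := hw.2
      rw [hzim, hwim, uIcc_of_le (by linarith)] at h1
      have h2 : |w.im| ≤ η := abs_le.mpr ⟨h1.1, h1.2⟩
      constructor
      · exact lt_of_le_of_lt h2 hηθ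
      · simp only [mem_singleton_iff]
        intro hwb
        have h3 := congrArg Complex.im hwb
        rw [hbim] at h3
        rw [h3, abs_of_pos (by linarith)] at h2
        linarith
    have hrect := Complex.integral_boundary_rect_eq_zero_of_differentiableOn F zc wc
      (hFd.mono hsub)
    rw [hzre, hzim, hwre, hwim] at hrect
    have hbots : (∫ x in (-R)..R, F ((x : ℂ) + ((-η : ℝ) : ℂ) * I))
        = P R - ∫ x in (-R)..R, G a / ((x : ℂ) - η * I - a) := by
      rw [hP]
      calc (∫ x in (-R)..R, F ((x : ℂ) + ((-η : ℝ) : ℂ) * I))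
          = ∫ x in (-R)..R, (G ((x : ℂ) - η * I) / ((x : ℂ) - η * I - a)
              - G a / ((x : ℂ) - η * I - a)) :=
            intervalIntegral.integral_congr fun x _ => hFbot x
        _ = _ := intervalIntegral.integral_sub (iiGbot R) (iiAbot R)
    have htops : (∫ x in (-R)..R, F ((x : ℂ) + ((η : ℝ) : ℂ) * I))
        = Q R - ∫ x in (-R)..R, G a / ((x : ℂ) + η * I - a) := by
      rw [hQ]
      calc (∫ x in (-R)..R, F ((x : ℂ) + ((η : ℝ) : ℂ) * I))
          = ∫ x in (-R)..R, (G ((x : ℂ) + η * I) / ((x : ℂ) + η * I - a)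
              - G a / ((x : ℂ) + η * I - a)) :=
            intervalIntegral.integral_congr fun x _ => hFtop x
        _ = _ := intervalIntegral.integral_sub (iiGtop R) (iiAtop R)
    have hA : (∫ x in (-R)..R, G a / ((x : ℂ) - η * I - a))
        - (∫ x in (-R)..R, G a / ((x : ℂ) + η * I - a))
        = G a * ((2 * (η : ℂ) * I) * ((KR R : ℝ) : ℂ)) := by
      rw [← intervalIntegral.integral_sub (iiAbot R) (iiAtop R)]
      have hpt : ∀ x : ℝ, G a / ((x : ℂ) - η * I - a) - G a / ((x : ℂ) + η * I - a)
          = (G a * (2 * (η : ℂ) * I)) * ((kk x : ℝ) : ℂ) := by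
        intro x
        have d1 := hne_bot_a x
        have d2 := hne_top_a x
        have hmul : (((x : ℂ) - η * I - a) * ((x : ℂ) + η * I - a) : ℂ)
            = (((x - a) ^ 2 + η ^ 2 : ℝ) : ℂ) := by
          push_cast
          linear_combination (-(η : ℂ) ^ 2) * Complex.I_sq
        rw [div_sub_div _ _ d1 d2, hmul]
        rw [show G (a : ℂ) * ((x : ℂ) + η * I - a) - ((x : ℂ) - η * I - a) * G (a : ℂ)
          = G (a : ℂ) * (2 * (η : ℂ) * I) from by ring]
        rw [div_eq_mul_inv]
        congr 1
        rw [hkk]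
        push_cast
        ring
      calc (∫ x in (-R)..R, (G a / ((x : ℂ) - η * I - a) - G a / ((x : ℂ) + η * I - a)))
          = ∫ x in (-R)..R, (G a * (2 * (η : ℂ) * I)) * ((kk x : ℝ) : ℂ) :=
            intervalIntegral.integral_congr fun x _ => hpt x
        _ = (G a * (2 * (η : ℂ) * I)) * ∫ x in (-R)..R, ((kk x : ℝ) : ℂ) :=
            intervalIntegral.integral_const_mul _ _
        _ = G a * ((2 * (η : ℂ) * I) * ((KR R : ℝ) : ℂ)) := by
            rw [intervalIntegral.integral_ofReal, hKR]
            ring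
    rw [hbots, htops] at hrect
    rw [smul_eq_mul, smul_eq_mul] at hrect ⊢
    linear_combination hrect + hA
  -- limits of each piece
  set Ibot : ℂ := ∫ t : ℝ, G ((t : ℂ) - η * I) / ((t : ℂ) - η * I - a) with hIbotdef
  set Itop : ℂ := ∫ t : ℝ, G ((t : ℂ) + η * I) / ((t : ℂ) + η * I - a) with hItopdef
  have hPlim : Tendsto P atTop (nhds Ibot) := by
    rw [hP, hIbotdef]
    exact intervalIntegral_tendsto_integral hIbot tendsto_neg_atTop_atBot tendsto_id
  have hQlim : Tendsto Q atTop (nhds Itop) := by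
    rw [hQ, hItopdef]
    exact intervalIntegral_tendsto_integral hItop tendsto_neg_atTop_atBot tendsto_id
  have hKlim : Tendsto (fun R => ((KR R : ℝ) : ℂ)) atTop (nhds ((Real.pi / η : ℝ) : ℂ)) := by
    have h0 : Tendsto KR atTop (nhds (∫ t : ℝ, kk t)) := by
      rw [hKR]
      exact intervalIntegral_tendsto_integral (by rw [hkk]; exact ker_integrable hη a)
        tendsto_neg_atTop_atBot tendsto_id
    have h1 : (∫ t : ℝ, kk t) = Real.pi / η := by rw [hkk]; exact ker_integral hη a
    rw [h1] at h0
    exact (Complex.continuous_ofReal.tendsto _).comp h0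
  -- vertical sides tend to zero
  have hvert : ∀ c : ℝ, |a| + 1 ≤ |c| → ‖∫ y in (-η)..η, F ((c : ℂ) + (y : ℂ) * I)‖
      ≤ (M + ‖G (a : ℂ)‖) / (|c| - |a|) * (2 * η) := by
    intro c hc
    have hbnd : ∀ y ∈ Set.uIoc (-η) η, ‖F ((c : ℂ) + (y : ℂ) * I)‖ ≤ (M + ‖G (a : ℂ)‖) / (|c| - |a|) := by
      intro y hy
      have hy' : |y| ≤ η := by
        rw [uIoc_of_le (by linarith : -η ≤ η)] at hy
        exact abs_le.mpr ⟨hy.1.le, hy.2⟩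
      have hca : (1 : ℝ) ≤ |c| - |a| := by linarith
      have hre_a : (((c : ℂ) + (y : ℂ) * I) - (a : ℂ)).re = c - a := by simp
      have hre_b : (((c : ℂ) + (y : ℂ) * I) - b).re = c - a := by rw [hb]; simp
      have habs_ca : |c| - |a| ≤ |c - a| := abs_sub_abs_le_abs_sub c a
      have hd1 : |c| - |a| ≤ ‖(c : ℂ) + (y : ℂ) * I - (a : ℂ)‖ := by
        calc |c| - |a| ≤ |c - a| := habs_ca
          _ = |(((c : ℂ) + (y : ℂ) * I) - (a : ℂ)).re| := by rw [hre_a]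
          _ ≤ ‖((c : ℂ) + (y : ℂ) * I) - (a : ℂ)‖ := Complex.abs_re_le_norm _
          _ = ‖(c : ℂ) + (y : ℂ) * I - (a : ℂ)‖ := rfl
      have hd2 : |c| - |a| ≤ ‖(c : ℂ) + (y : ℂ) * I - b‖ := by
        calc |c| - |a| ≤ |c - a| := habs_ca
          _ = |(((c : ℂ) + (y : ℂ) * I) - b).re| := by rw [hre_b]
          _ ≤ ‖((c : ℂ) + (y : ℂ) * I) - b‖ := Complex.abs_re_le_norm _
          _ = ‖(c : ℂ) + (y : ℂ) * I - b‖ := rfl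
      have hpa' : ((c : ℂ) + (y : ℂ) * I) ≠ (a : ℂ) := by
        intro hcon
        have h5 : ‖(c : ℂ) + (y : ℂ) * I - (a : ℂ)‖ = 0 := by rw [hcon]; simp
        rw [h5] at hd1
        linarith
      have hFval : F ((c : ℂ) + (y : ℂ) * I)
          = (G ((c : ℂ) + (y : ℂ) * I) - G (a : ℂ)) / (((c : ℂ) + (y : ℂ) * I) - (a : ℂ)) := by
        rw [hF, dslope_of_ne G hpa', slope_def_field]
      have hGp : ‖G ((c : ℂ) + (y : ℂ) * I)‖ ≤ M := by
        rw [hG]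
        simp only []
        rw [norm_div]
        have hgp : ‖g ((c : ℂ) + (y : ℂ) * I)‖ ≤ M := by
          apply hM
          have him : ((c : ℂ) + (y : ℂ) * I).im = y := by simp
          rw [him]
          exact lt_of_le_of_lt hy' hηθ
        have h1b : 1 ≤ ‖(c : ℂ) + (y : ℂ) * I - b‖ := le_trans hca hd2
        calc ‖g ((c : ℂ) + (y : ℂ) * I)‖ / ‖(c : ℂ) + (y : ℂ) * I - b‖
            ≤ M / 1 := div_le_div₀ hM0 hgp one_pos h1b
          _ = M := div_one M
      rw [hFval, norm_div]
      have hnum : ‖G ((c : ℂ) + (y : ℂ) * I) - G (a : ℂ)‖ ≤ M + ‖G (a : ℂ)‖ :=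
        le_trans (norm_sub_le _ _) (by linarith)
      exact div_le_div₀ (by positivity) hnum (by linarith) hd1
    calc ‖∫ y in (-η)..η, F ((c : ℂ) + (y : ℂ) * I)‖
        ≤ (M + ‖G (a : ℂ)‖) / (|c| - |a|) * |η - (-η)| :=
          intervalIntegral.norm_integral_le_of_norm_le_const hbnd
      _ = (M + ‖G (a : ℂ)‖) / (|c| - |a|) * (2 * η) := by
          rw [_root_.abs_of_nonneg (by linarith : (0:ℝ) ≤ η - (-η))]
          ring
  have hbndlim : Tendsto (fun R : ℝ => (M + ‖G (a : ℂ)‖) / (R - |a|) * (2 * η)) atTop (nhds 0) := by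
    have h0 : Tendsto (fun R : ℝ => (M + ‖G (a : ℂ)‖) / (R - |a|)) atTop (nhds 0) :=
      Tendsto.div_atTop tendsto_const_nhds
        (tendsto_atTop_add_const_right atTop (-|a|) tendsto_id)
    have h1 := h0.mul_const (2 * η)
    simpa using h1
  have hVRlim : Tendsto (fun R => I • VR R) atTop (nhds 0) := by
    refine squeeze_zero_norm' ?_ hbndlim
    filter_upwards [eventually_ge_atTop (|a| + 1)] with R hR
    have hRpos : 0 < R := lt_of_lt_of_le (by positivity) hR
    have h2 := hvert R (by rwa [abs_of_pos hRpos])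
    rw [abs_of_pos hRpos] at h2
    calc ‖I • VR R‖ = ‖VR R‖ := by rw [norm_smul, Complex.norm_I, one_mul]
      _ ≤ _ := h2
  have hVLlim : Tendsto (fun R => I • VL R) atTop (nhds 0) := by
    refine squeeze_zero_norm' ?_ hbndlim
    filter_upwards [eventually_ge_atTop (|a| + 1)] with R hR
    have hRpos : 0 < R := lt_of_lt_of_le (by positivity) hR
    have h2 := hvert (-R) (by rwa [abs_neg, abs_of_pos hRpos])
    rw [abs_neg, abs_of_pos hRpos] at h2
    calc ‖I • VL R‖ = ‖VL R‖ := by rw [norm_smul, Complex.norm_I, one_mul]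
      _ ≤ _ := h2
  -- combine all limits
  have hcomb : Tendsto
      (fun R => P R - Q R - G (a : ℂ) * ((2 * (η : ℂ) * I) * ((KR R : ℝ) : ℂ)) + I • VR R - I • VL R)
      atTop
      (nhds (Ibot - Itop - G (a : ℂ) * ((2 * (η : ℂ) * I) * ((Real.pi / η : ℝ) : ℂ)) + 0 - 0)) :=
    ((((hPlim.sub hQlim).sub
      (tendsto_const_nhds.mul (tendsto_const_nhds.mul hKlim))).add hVRlim).sub hVLlim)
  have hzero : Ibot - Itop - G (a : ℂ) * ((2 * (η : ℂ) * I) * ((Real.pi / η : ℝ) : ℂ)) + 0 - 0 = 0 := by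
    have hev : (fun R => P R - Q R - G (a : ℂ) * ((2 * (η : ℂ) * I) * ((KR R : ℝ) : ℂ))
        + I • VR R - I • VL R) =ᶠ[atTop] (fun _ => (0 : ℂ)) := by
      filter_upwards [eventually_ge_atTop (|a| + 1)] with R hR
      exact key R hR
    exact tendsto_nhds_unique hcomb (Tendsto.congr' hev.symm tendsto_const_nhds)
  have hzeq : Ibot - Itop = G (a : ℂ) * ((2 * (η : ℂ) * I) * ((Real.pi / η : ℝ) : ℂ)) := by
    linear_combination hzero
  -- recover g a
  have habne : ((a : ℂ) - b) ≠ 0 := by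
    intro hcon
    have := congrArg Complex.im hcon
    simp [hb] at this
    linarith
  have hga : g (a : ℂ) = G (a : ℂ) * ((a : ℂ) - b) := by
    rw [hG]
    simp only []
    rw [div_mul_cancel₀ _ habne]
  have hab : ((a : ℂ) - b) = -(2 * (η : ℂ) * I) := by rw [hb]; ring
  have hfinal : g (a : ℂ) * ((Real.pi / η : ℝ) : ℂ) = -(Ibot - Itop) := by
    rw [hga, hab, hzeq]
    ring
  -- take norms
  have hnorm : ‖g (a : ℂ)‖ * (Real.pi / η) = ‖Ibot - Itop‖ := by
    have h1 : ‖g (a : ℂ) * ((Real.pi / η : ℝ) : ℂ)‖ = ‖g (a : ℂ)‖ * (Real.pi / η) := by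
      rw [norm_mul, Complex.norm_real, Real.norm_of_nonneg (by positivity)]
    rw [← h1, hfinal, norm_neg]
  have hIbotle : ‖Ibot‖ ≤ ∫ t : ℝ, ‖g ((t : ℂ) - η * I)‖ * kk t := by
    rw [hIbotdef]
    exact norm_integral_le_of_norm_le hmaj_bot (Eventually.of_forall hGbot)
  have hItople : ‖Itop‖ ≤ ∫ t : ℝ, ‖g ((t : ℂ) + η * I)‖ * kk t := by
    rw [hItopdef]
    exact norm_integral_le_of_norm_le hmaj_top (Eventually.of_forall hGtop)
  have hsumint : (∫ t : ℝ, ‖g ((t : ℂ) + η * I)‖ * kk t) + (∫ t : ℝ, ‖g ((t : ℂ) - η * I)‖ * kk t)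
      = ∫ t : ℝ, (‖g ((t : ℂ) + η * I)‖ + ‖g ((t : ℂ) - η * I)‖) * kk t := by
    rw [← integral_add hmaj_top hmaj_bot]
    congr 1
    funext t
    ring
  have hmain : ‖g (a : ℂ)‖ * (Real.pi / η)
      ≤ ∫ t : ℝ, (‖g ((t : ℂ) + η * I)‖ + ‖g ((t : ℂ) - η * I)‖) * kk t := by
    rw [hnorm, ← hsumint]
    calc ‖Ibot - Itop‖ ≤ ‖Ibot‖ + ‖Itop‖ := norm_sub_le _ _
      _ ≤ _ := by
        have := add_le_add hIbotle hItople
        linarith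
  have hπη : (0 : ℝ) < Real.pi / η := by positivity
  have hres := mul_le_mul_of_nonneg_right hmain (le_of_lt (by positivity : (0 : ℝ) < η / Real.pi))
  have hxx : ‖g (a : ℂ)‖ * (Real.pi / η) * (η / Real.pi) = ‖g (a : ℂ)‖ := by
    field_simp
  rw [hxx] at hres
  calc ‖g (a : ℂ)‖ ≤ (∫ t : ℝ, (‖g ((t : ℂ) + η * I)‖ + ‖g ((t : ℂ) - η * I)‖) * kk t) * (η / Real.pi) := hres
    _ = (η / Real.pi) * ∫ t : ℝ, (‖g ((t : ℂ) + η * I)‖ + ‖g ((t : ℂ) - η * I)‖) * kk t := mul_comm _ _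





end Stmt4Aux

open Stmt4Aux Set Filter in
/-- If `g` is bounded and analytic on the strip `S_θ = {|Im z| < θ}` and its restrictions
to the lines `Im z = ±η` (for some `0 < η < θ`) are square integrable, then the samples
`g(n ln 2)`, `n ∈ ℤ`, are square summable. -/
theorem stmt_4 (θ η : ℝ) (hη : 0 < η) (hηθ : η < θ)
    (g : ℂ → ℂ)
    (hg : DifferentiableOn ℂ g {z : ℂ | |z.im| < θ})
    (hbdd : ∃ M, ∀ z : ℂ, |z.im| < θ → ‖g z‖ ≤ M)
    (hplus : Integrable (fun x : ℝ => ‖g (x + η * I)‖ ^ 2))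
    (hminus : Integrable (fun x : ℝ => ‖g (x - η * I)‖ ^ 2)) :
    Summable (fun n : ℤ => ‖g ((n : ℝ) * Real.log 2)‖ ^ 2) := by
  have hθ : 0 < θ := hη.trans hηθ
  have hl : 0 < Real.log 2 := Real.log_pos one_lt_two
  set l : ℝ := Real.log 2 with hldef
  obtain ⟨B, hB⟩ := lattice_bound hη hl
  -- continuity of the boundary restrictions
  have hgc : ContinuousOn g {z : ℂ | |z.im| < θ} := hg.continuousOn
  have hline : ∀ c : ℝ, |c| < θ → Continuous fun t : ℝ => g ((t : ℂ) + (c : ℂ) * I) := by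
    intro c hc
    apply hgc.comp_continuous (Complex.continuous_ofReal.add continuous_const)
    intro t
    show |((t : ℂ) + (c : ℂ) * I).im| < θ
    simpa using hc
  have hctop : Continuous fun t : ℝ => g ((t : ℂ) + (η : ℂ) * I) :=
    hline η (by rwa [abs_of_pos hη])
  have hcbot : Continuous fun t : ℝ => g ((t : ℂ) - (η : ℂ) * I) := by
    have h0 := hline (-η) (by rwa [abs_neg, abs_of_pos hη])
    have he : ∀ t : ℝ, (t : ℂ) + ((-η : ℝ) : ℂ) * I = (t : ℂ) - (η : ℂ) * I := by
      intro t; push_cast; ring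
    simpa only [he] using h0
  set h : ℝ → ℝ := fun t => ‖g ((t : ℂ) + η * I)‖ + ‖g ((t : ℂ) - η * I)‖ with hh
  have hhc : Continuous h := hctop.norm.add hcbot.norm
  have hh0 : ∀ t, 0 ≤ h t := fun t => add_nonneg (norm_nonneg _) (norm_nonneg _)
  have hh2 : Integrable (fun t => h t ^ 2) := by
    apply Integrable.mono' (((hplus.add hminus).const_mul 2))
      ((hhc.pow 2).aestronglyMeasurable)
    filter_upwards with t
    show ‖h t ^ 2‖ ≤ _
    rw [Real.norm_of_nonneg (by positivity)]
    rw [hh]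
    simp only [Pi.add_apply]
    have h1 := norm_nonneg (g ((t : ℂ) + η * I))
    have h2 := norm_nonneg (g ((t : ℂ) - η * I))
    nlinarith [sq_nonneg (‖g ((t : ℂ) + η * I)‖ - ‖g ((t : ℂ) - η * I)‖)]
  -- per-n facts
  have hkpos : ∀ (c t : ℝ), 0 < (t - c) ^ 2 + η ^ 2 := fun c t => by positivity
  have hki : ∀ c : ℝ, Integrable (fun t : ℝ => ((t - c) ^ 2 + η ^ 2)⁻¹) :=
    fun c => ker_integrable hη c
  have hkc : ∀ c : ℝ, Continuous (fun t : ℝ => ((t - c) ^ 2 + η ^ 2)⁻¹) := by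
    intro c
    apply Continuous.inv₀
    · exact ((continuous_id.sub continuous_const).pow 2).add continuous_const
    · intro t; exact (hkpos c t).ne'
  have hh2k : ∀ c : ℝ, Integrable (fun t => h t ^ 2 * ((t - c) ^ 2 + η ^ 2)⁻¹) := by
    intro c
    apply Integrable.mono' (hh2.const_mul ((η ^ 2)⁻¹))
      (((hhc.pow 2).mul (hkc c)).aestronglyMeasurable)
    filter_upwards with t
    have hk0 : 0 ≤ ((t - c) ^ 2 + η ^ 2)⁻¹ := (inv_pos.mpr (hkpos c t)).le
    have hkle : ((t - c) ^ 2 + η ^ 2)⁻¹ ≤ (η ^ 2)⁻¹ := by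
      apply inv_anti₀ (by positivity)
      nlinarith [sq_nonneg (t - c)]
    show ‖h t ^ 2 * ((t - c) ^ 2 + η ^ 2)⁻¹‖ ≤ _
    rw [Real.norm_of_nonneg (mul_nonneg (by positivity) hk0)]
    calc h t ^ 2 * ((t - c) ^ 2 + η ^ 2)⁻¹ ≤ h t ^ 2 * (η ^ 2)⁻¹ :=
          mul_le_mul_of_nonneg_left hkle (by positivity)
      _ = (η ^ 2)⁻¹ * h t ^ 2 := mul_comm _ _
  -- the key pointwise estimate
  have key : ∀ n : ℤ, ‖g (Complex.ofReal ((n : ℝ) * l))‖ ^ 2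
      ≤ (η / Real.pi) * ∫ t : ℝ, h t ^ 2 * ((t - (n : ℝ) * l) ^ 2 + η ^ 2)⁻¹ := by
    intro n
    set c : ℝ := (n : ℝ) * l with hc
    have hpt := pointwise θ η hη hηθ g hg hbdd hplus hminus c
    have hLHSnn : 0 ≤ ∫ t : ℝ, h t * ((t - c) ^ 2 + η ^ 2)⁻¹ :=
      integral_nonneg fun t => mul_nonneg (hh0 t) (inv_pos.mpr (hkpos c t)).le
    have hcs := cs_int hh0 (fun t => (inv_pos.mpr (hkpos c t)).le)
      hhc.aestronglyMeasurable (hkc c).aestronglyMeasurable (hki c) (hh2k c)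
    rw [ker_integral hη c] at hcs
    have hb1 : ‖g ((c : ℝ) : ℂ)‖ ≤ (η / Real.pi) * ∫ t : ℝ, h t * ((t - c) ^ 2 + η ^ 2)⁻¹ := hpt
    have hsq : ‖g ((c : ℝ) : ℂ)‖ ^ 2
        ≤ (η / Real.pi) ^ 2 * (∫ t : ℝ, h t * ((t - c) ^ 2 + η ^ 2)⁻¹) ^ 2 := by
      rw [← mul_pow]
      exact pow_le_pow_left₀ (norm_nonneg _) hb1 2
    have hchain : (η / Real.pi) ^ 2 * (∫ t : ℝ, h t * ((t - c) ^ 2 + η ^ 2)⁻¹) ^ 2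
        ≤ (η / Real.pi) ^ 2 * ((∫ t : ℝ, h t ^ 2 * ((t - c) ^ 2 + η ^ 2)⁻¹) * (Real.pi / η)) :=
      mul_le_mul_of_nonneg_left hcs (by positivity)
    have harith : (η / Real.pi) ^ 2 * ((∫ t : ℝ, h t ^ 2 * ((t - c) ^ 2 + η ^ 2)⁻¹) * (Real.pi / η))
        = (η / Real.pi) * ∫ t : ℝ, h t ^ 2 * ((t - c) ^ 2 + η ^ 2)⁻¹ := by
      have hπ : Real.pi ≠ 0 := Real.pi_ne_zero
      field_simp
    calc ‖g ((c : ℝ) : ℂ)‖ ^ 2 ≤ _ := hsq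
      _ ≤ _ := hchain
      _ = _ := harith
  -- summability of the majorant
  have hmajsum : Summable (fun n : ℤ => ∫ t : ℝ, h t ^ 2 * ((t - (n : ℝ) * l) ^ 2 + η ^ 2)⁻¹) := by
    apply summable_of_sum_le (c := B * ∫ t : ℝ, h t ^ 2)
    · intro n
      exact integral_nonneg fun t => mul_nonneg (by positivity) (inv_pos.mpr (hkpos _ t)).le
    · intro F
      have h1 : ∑ n ∈ F, ∫ t : ℝ, h t ^ 2 * ((t - (n : ℝ) * l) ^ 2 + η ^ 2)⁻¹
          = ∫ t : ℝ, ∑ n ∈ F, h t ^ 2 * ((t - (n : ℝ) * l) ^ 2 + η ^ 2)⁻¹ :=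
        (integral_finset_sum F fun n _ => hh2k ((n : ℝ) * l)).symm
      rw [h1]
      have h2 : ∫ t : ℝ, ∑ n ∈ F, h t ^ 2 * ((t - (n : ℝ) * l) ^ 2 + η ^ 2)⁻¹
          ≤ ∫ t : ℝ, h t ^ 2 * B := by
        apply integral_mono (integrable_finset_sum F fun n _ => hh2k ((n : ℝ) * l))
          (hh2.mul_const B)
        intro t
        calc ∑ n ∈ F, h t ^ 2 * ((t - (n : ℝ) * l) ^ 2 + η ^ 2)⁻¹
            = h t ^ 2 * ∑ n ∈ F, ((t - (n : ℝ) * l) ^ 2 + η ^ 2)⁻¹ := by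
              rw [Finset.mul_sum]
          _ ≤ h t ^ 2 * B := mul_le_mul_of_nonneg_left (hB t F) (by positivity)
      calc _ ≤ ∫ t : ℝ, h t ^ 2 * B := h2
        _ = B * ∫ t : ℝ, h t ^ 2 := by rw [integral_mul_const]; ring
  -- conclusion
  have hgoalcast : ∀ n : ℤ, (((n : ℤ) : ℝ) : ℂ) * ((l : ℝ) : ℂ) = Complex.ofReal ((n : ℝ) * l) := by
    intro n; push_cast; ring
  simp only [hgoalcast]
  apply Summable.of_nonneg_of_le (fun n => by positivity) (fun n => key n)
  exact hmajsum.mul_left (η / Real.pi)
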